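/- Let Φ be an irreducible Markov chain on a finite state space S with stationary distribution π, and let x₀ ∈ S with π(x₀) > 0. If ξ denotes the first return time to x₀ starting from x₀, then E[ξ²] = (1 + 2·E_π[T_{x₀}]) / π(x₀), where E_π[T_{x₀}] is the expected hitting time of x₀ when the initial state is distributed according to π. -/

import Mathlib

/-- Probability of a path: the product of one-step transition probabilities along
consecutive states of the list. -/
noncomputable def pathProb {S : Type*} (p : S → S → ℝ) : List S → ℝ
  | [] => 1
  | [_] => 1
  | a :: b :: rest => p a b * pathProb p (b :: rest)

namespace RTSM

set_option linter.unusedSectionVars false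

variable {S : Type*} [Fintype S] [DecidableEq S]

lemma pathProb_nonneg (p : S → S → ℝ) (hp0 : ∀ u v, 0 ≤ p u v) :
    ∀ L : List S, 0 ≤ pathProb p L
  | [] => by simp [pathProb]
  | [_] => by simp [pathProb]
  | a :: b :: rest => by
      rw [pathProb]
      exact mul_nonneg (hp0 a b) (pathProb_nonneg p hp0 (b :: rest))

lemma pathProb_cons_cons (p : S → S → ℝ) (a b : S) (rest : List S) :
    pathProb p (a :: b :: rest) = p a b * pathProb p (b :: rest) := rfl

noncomputable def sVec (p : Matrix S S ℝ) (x₀ : S) : ℕ → S → ℝ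
  | 0 => fun y => if y = x₀ then 1 else 0
  | n+1 => fun v => if v = x₀ then 0 else ∑ u, sVec p x₀ n u * p u v

noncomputable def wVec (p : Matrix S S ℝ) (π : S → ℝ) (x₀ : S) : ℕ → S → ℝ
  | 0 => fun y => if y = x₀ then 0 else π y
  | n+1 => fun v => if v = x₀ then 0 else ∑ u, wVec p π x₀ n u * p u v

noncomputable def Rv (p : Matrix S S ℝ) (x₀ : S) : ℕ → S → ℝ
  | 0 => fun _ => 1
  | n+1 => fun u => ∑ v, if v = x₀ then 0 else p u v * Rv p x₀ n v

variable (p : Matrix S S ℝ) (π : S → ℝ) (x₀ : S)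

lemma sVec_nonneg (hp0 : ∀ u v, 0 ≤ p u v) : ∀ n y, 0 ≤ sVec p x₀ n y
  | 0, y => by simp only [sVec]; positivity
  | n+1, y => by
      simp only [sVec]
      split
      · exact le_refl 0
      · exact Finset.sum_nonneg fun u _ => mul_nonneg (sVec_nonneg hp0 n u) (hp0 u y)

lemma wVec_nonneg (hp0 : ∀ u v, 0 ≤ p u v) (hπ0 : ∀ u, 0 ≤ π u) :
    ∀ n y, 0 ≤ wVec p π x₀ n y
  | 0, y => by simp only [wVec]; split <;> [exact le_refl 0; exact hπ0 y]
  | n+1, y => by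
      simp only [wVec]
      split
      · exact le_refl 0
      · exact Finset.sum_nonneg fun u _ => mul_nonneg (wVec_nonneg hp0 hπ0 n u) (hp0 u y)

lemma Rv_nonneg (hp0 : ∀ u v, 0 ≤ p u v) : ∀ n u, 0 ≤ Rv p x₀ n u
  | 0, u => by simp [Rv]
  | n+1, u => by
      simp only [Rv]
      refine Finset.sum_nonneg fun v _ => ?_
      split
      · exact le_refl 0
      · exact mul_nonneg (hp0 u v) (Rv_nonneg hp0 n v)

lemma sum_ite_ne (f : S → ℝ) :
    (∑ v, if v = x₀ then 0 else f v) = (∑ v, f v) - f x₀ := by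
  have h1 : (∑ v, if v = x₀ then f v else 0) = f x₀ := by
    rw [Finset.sum_ite_eq' Finset.univ x₀ f]; simp
  have h2 : (∑ v, f v) = (∑ v, if v = x₀ then f v else 0) + ∑ v, if v = x₀ then 0 else f v := by
    rw [← Finset.sum_add_distrib]
    refine Finset.sum_congr rfl fun v _ => ?_
    split <;> ring
  rw [h2, h1]; ring

lemma Rv_le_one (hp0 : ∀ u v, 0 ≤ p u v) (hp1 : ∀ u, ∑ v, p u v = 1) :
    ∀ n u, Rv p x₀ n u ≤ 1
  | 0, u => le_refl 1
  | n+1, u => by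
      simp only [Rv]
      calc (∑ v, if v = x₀ then 0 else p u v * Rv p x₀ n v)
          ≤ ∑ v, p u v := by
            refine Finset.sum_le_sum fun v _ => ?_
            split
            · exact hp0 u v
            · calc p u v * Rv p x₀ n v ≤ p u v * 1 :=
                    mul_le_mul_of_nonneg_left (Rv_le_one hp0 hp1 n v) (hp0 u v)
                _ = p u v := mul_one _
        _ = 1 := hp1 u

lemma Rv_antitone (hp0 : ∀ u v, 0 ≤ p u v) (hp1 : ∀ u, ∑ v, p u v = 1) :
    ∀ n u, Rv p x₀ (n+1) u ≤ Rv p x₀ n u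
  | 0, u => Rv_le_one p x₀ hp0 hp1 1 u
  | n+1, u => by
      simp only [Rv]
      refine Finset.sum_le_sum fun v _ => ?_
      split
      · exact le_refl 0
      · exact mul_le_mul_of_nonneg_left (Rv_antitone hp0 hp1 n v) (hp0 u v)


lemma pow_nonneg_entry (hp0 : ∀ u v, 0 ≤ p u v) : ∀ n u v, 0 ≤ (p ^ n) u v := by
  intro n
  induction n with
  | zero => intro u v; simp [Matrix.one_apply]; split <;> norm_num
  | succ n ih =>
      intro u v
      rw [pow_succ, Matrix.mul_apply]
      exact Finset.sum_nonneg fun y _ => mul_nonneg (ih u y) (hp0 y v)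

lemma pow_row_sum (hp1 : ∀ u, ∑ v, p u v = 1) : ∀ n u, ∑ v, (p ^ n) u v = 1 := by
  intro n
  induction n with
  | zero => intro u; simp [Matrix.one_apply]
  | succ n ih =>
      intro u
      simp only [pow_succ, Matrix.mul_apply]
      rw [Finset.sum_comm]
      calc (∑ y, ∑ v, (p ^ n) u y * p y v) = ∑ y, (p ^ n) u y * ∑ v, p y v := by
            simp [Finset.mul_sum]
        _ = 1 := by simp only [hp1, mul_one]; exact ih u

lemma pow_le_one_entry (hp0 : ∀ u v, 0 ≤ p u v) (hp1 : ∀ u, ∑ v, p u v = 1) (n : ℕ) (u v : S) :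
    (p ^ n) u v ≤ 1 := by
  calc (p ^ n) u v ≤ ∑ w, (p ^ n) u w :=
        Finset.single_le_sum (fun w _ => pow_nonneg_entry p hp0 n u w) (Finset.mem_univ v)
    _ = 1 := pow_row_sum p hp1 n u

lemma claimC (hp0 : ∀ u v, 0 ≤ p u v) (hp1 : ∀ u, ∑ v, p u v = 1) :
    ∀ n, 1 ≤ n → ∀ u, (p ^ n) u x₀ + Rv p x₀ n u ≤ 1 := by
  intro n
  induction n with
  | zero => intro h; exact absurd h (by omega)
  | succ n ih =>
      intro _ u
      rcases Nat.eq_zero_or_pos n with hn | hn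
      · subst hn
        simp only [zero_add, pow_one, Rv, mul_one]
        have := sum_ite_ne x₀ (fun v => p u v)
        rw [this, hp1 u]
        linarith
      · -- step
        have hrec : (p ^ (n+1)) u x₀ = ∑ y, p u y * (p ^ n) y x₀ := by
          rw [pow_succ', Matrix.mul_apply]
        rw [hrec]
        simp only [Rv]
        have key : (∑ y, p u y * (p ^ n) y x₀) + (∑ v, if v = x₀ then 0 else p u v * Rv p x₀ n v)
            = ∑ y, (p u y * (p ^ n) y x₀ + if y = x₀ then 0 else p u y * Rv p x₀ n y) := by
          rw [Finset.sum_add_distrib]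
        rw [key]
        calc (∑ y, (p u y * (p ^ n) y x₀ + if y = x₀ then 0 else p u y * Rv p x₀ n y))
            ≤ ∑ y, p u y := by
              refine Finset.sum_le_sum fun y _ => ?_
              split
              · calc p u y * (p ^ n) y x₀ + 0 = p u y * (p ^ n) y x₀ := by ring
                  _ ≤ p u y * 1 := mul_le_mul_of_nonneg_left
                      (pow_le_one_entry p hp0 hp1 n y x₀) (hp0 u y)
                  _ = p u y := mul_one _
              · calc p u y * (p ^ n) y x₀ + p u y * Rv p x₀ n y
                        = p u y * ((p ^ n) y x₀ + Rv p x₀ n y) := by ring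
                  _ ≤ p u y * 1 := mul_le_mul_of_nonneg_left (ih hn y) (hp0 u y)
                  _ = p u y := mul_one _
          _ = 1 := hp1 u





lemma Rv_mono (hp0 : ∀ u v, 0 ≤ p u v) (hp1 : ∀ u, ∑ v, p u v = 1) {m n : ℕ} (h : m ≤ n)
    (u : S) : Rv p x₀ n u ≤ Rv p x₀ m u := by
  induction n with
  | zero => simp_all
  | succ n ih =>
      rcases Nat.lt_or_ge m (n+1) with h' | h'
      · exact le_trans (Rv_antitone p x₀ hp0 hp1 n u) (ih (by omega))
      · have : m = n + 1 := by omega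
        subst this; exact le_refl _

lemma exists_pos_pow (hp0 : ∀ u v, 0 ≤ p u v) (hp1 : ∀ u, ∑ v, p u v = 1)
    (hirr : ∀ u v : S, ∃ n : ℕ, 0 < (p ^ n) u v) (u : S) :
    ∃ n, 1 ≤ n ∧ 0 < (p ^ n) u x₀ := by
  obtain ⟨m, hm⟩ := hirr u x₀
  rcases Nat.eq_zero_or_pos m with h0 | h1
  · subst h0
    have hux : u = x₀ := by
      by_contra h
      simp [Matrix.one_apply, h] at hm
    subst hux
    have hv : ∃ v, 0 < p u v := by
      by_contra h
      push_neg at h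
      have : ∀ v, p u v = 0 := fun v => le_antisymm (h v) (hp0 u v)
      have := hp1 u
      simp_all
    obtain ⟨v, hv⟩ := hv
    obtain ⟨k, hk⟩ := hirr v u
    refine ⟨k + 1, by omega, ?_⟩
    have hrec : (p ^ (k+1)) u u = ∑ y, p u y * (p ^ k) y u := by
      rw [pow_succ', Matrix.mul_apply]
    rw [hrec]
    have hterm : 0 < p u v * (p ^ k) v u := mul_pos hv hk
    calc (0:ℝ) < p u v * (p ^ k) v u := hterm
      _ ≤ ∑ y, p u y * (p ^ k) y u :=
          Finset.single_le_sum
            (fun y _ => mul_nonneg (hp0 u y) (pow_nonneg_entry p hp0 k y u))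
            (Finset.mem_univ v)
  · exact ⟨m, h1, hm⟩

lemma exists_N (hp0 : ∀ u v, 0 ≤ p u v) (hp1 : ∀ u, ∑ v, p u v = 1)
    (hirr : ∀ u v : S, ∃ n : ℕ, 0 < (p ^ n) u v) :
    ∃ N : ℕ, 1 ≤ N ∧ ∀ u, Rv p x₀ N u < 1 := by
  have h : ∀ u : S, ∃ n, 1 ≤ n ∧ Rv p x₀ n u < 1 := by
    intro u
    obtain ⟨n, hn1, hnpos⟩ := exists_pos_pow p x₀ hp0 hp1 hirr u
    refine ⟨n, hn1, ?_⟩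
    have := claimC p x₀ hp0 hp1 n hn1 u
    linarith
  choose f hf1 hf2 using h
  refine ⟨(Finset.univ.sup f) + 1, by omega, fun u => ?_⟩
  have hle : f u ≤ Finset.univ.sup f + 1 :=
    le_trans (Finset.le_sup (Finset.mem_univ u)) (by omega)
  exact lt_of_le_of_lt (Rv_mono p x₀ hp0 hp1 hle u) (hf2 u)

lemma Rv_step (hp0 : ∀ u v, 0 ≤ p u v) (N : ℕ) (c : ℝ) (hc0 : 0 ≤ c)
    (hc : ∀ v, Rv p x₀ N v ≤ c) : ∀ m u, Rv p x₀ (m + N) u ≤ c * Rv p x₀ m u := by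
  intro m
  induction m with
  | zero => intro u; simpa [Rv] using hc u
  | succ m ih =>
      intro u
      have heq : m + 1 + N = (m + N) + 1 := by omega
      rw [heq]
      show (∑ v, if v = x₀ then 0 else p u v * Rv p x₀ (m + N) v) ≤ c * Rv p x₀ (m+1) u
      have : c * Rv p x₀ (m+1) u = ∑ v, if v = x₀ then 0 else p u v * (c * Rv p x₀ m v) := by
        show c * (∑ v, if v = x₀ then 0 else p u v * Rv p x₀ m v) = _
        rw [Finset.mul_sum]
        refine Finset.sum_congr rfl fun v _ => ?_
        split <;> ring
      rw [this]
      refine Finset.sum_le_sum fun v _ => ?_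
      split
      · exact le_refl 0
      · exact mul_le_mul_of_nonneg_left (ih v) (hp0 u v)

lemma Rv_pow_bound (hp0 : ∀ u v, 0 ≤ p u v) (hp1 : ∀ u, ∑ v, p u v = 1)
    (N : ℕ) (hN : 1 ≤ N) (c : ℝ) (hc0 : 0 ≤ c)
    (hc : ∀ v, Rv p x₀ N v ≤ c) (n : ℕ) (u : S) :
    Rv p x₀ n u ≤ c ^ (n / N) := by
  have key : ∀ q r u, Rv p x₀ (r + q * N) u ≤ c ^ q * Rv p x₀ r u := by
    intro q
    induction q with
    | zero => intro r u; simp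
    | succ q ih =>
        intro r u
        have heq : r + (q+1) * N = (r + q * N) + N := by ring
        rw [heq]
        calc Rv p x₀ ((r + q * N) + N) u ≤ c * Rv p x₀ (r + q * N) u :=
              Rv_step p x₀ hp0 N c hc0 hc _ u
          _ ≤ c * (c ^ q * Rv p x₀ r u) := mul_le_mul_of_nonneg_left (ih r u) hc0
          _ = c ^ (q+1) * Rv p x₀ r u := by ring
  have hn : n = n % N + (n / N) * N := by
    rw [Nat.mod_add_div']
  calc Rv p x₀ n u = Rv p x₀ (n % N + (n / N) * N) u := by rw [← hn]
    _ ≤ c ^ (n / N) * Rv p x₀ (n % N) u := key _ _ u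
    _ ≤ c ^ (n / N) * 1 := mul_le_mul_of_nonneg_left (Rv_le_one p x₀ hp0 hp1 _ u)
          (pow_nonneg hc0 _)
    _ = c ^ (n / N) := mul_one _



section Algebra
variable (p : Matrix S S ℝ) (π : S → ℝ) (x₀ : S)

/-- `Aseq n = P(ξ > n)` starting from `x₀`. -/
noncomputable def Aseq (n : ℕ) : ℝ := ∑ y, sVec p x₀ n y
/-- `Wseq n = P_π(T > n)`. -/
noncomputable def Wseq (n : ℕ) : ℝ := ∑ y, wVec p π x₀ n y
/-- `aseq n = P(ξ = n+1)`. -/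
noncomputable def aseq (n : ℕ) : ℝ := ∑ y, sVec p x₀ n y * p y x₀
/-- `bseq n = P_π(T = n+1)`. -/
noncomputable def bseq (n : ℕ) : ℝ := ∑ y, wVec p π x₀ n y * p y x₀

lemma statA (hπs : ∀ v, ∑ u, π u * p u v = π v) :
    ∀ n y, π x₀ * sVec p x₀ (n+1) y + wVec p π x₀ (n+1) y = wVec p π x₀ n y := by
  intro n
  induction n with
  | zero =>
      intro y
      by_cases hy : y = x₀
      · subst hy; simp [sVec, wVec]
      · simp only [sVec, wVec, if_neg hy]
        have h1 : (∑ u, (if u = x₀ then (1:ℝ) else 0) * p u y) = p x₀ y := by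
          have he : ∀ u, (if u = x₀ then (1:ℝ) else 0) * p u y
              = if u = x₀ then p u y else 0 := by
            intro u; split <;> ring
          simp only [he]
          rw [Finset.sum_ite_eq' Finset.univ x₀ (fun u => p u y)]
          simp
        have h2 : (∑ u, (if u = x₀ then (0:ℝ) else π u) * p u y)
            = (∑ u, π u * p u y) - π x₀ * p x₀ y := by
          have he : ∀ u, (if u = x₀ then (0:ℝ) else π u) * p u y
              = if u = x₀ then 0 else π u * p u y := by
            intro u; split <;> ring
          simp only [he]
          exact sum_ite_ne x₀ (fun u => π u * p u y)
        rw [h1, h2, hπs y]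
        ring
  | succ n ih =>
      intro y
      by_cases hy : y = x₀
      · subst hy; simp [sVec, wVec]
      · show π x₀ * sVec p x₀ (n+2) y + wVec p π x₀ (n+2) y = wVec p π x₀ (n+1) y
        have hs : sVec p x₀ (n+2) y = ∑ u, sVec p x₀ (n+1) u * p u y := by
          show (if y = x₀ then 0 else ∑ u, sVec p x₀ (n+1) u * p u y) = _
          rw [if_neg hy]
        have hw : wVec p π x₀ (n+2) y = ∑ u, wVec p π x₀ (n+1) u * p u y := by
          show (if y = x₀ then 0 else ∑ u, wVec p π x₀ (n+1) u * p u y) = _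
          rw [if_neg hy]
        have hw' : wVec p π x₀ (n+1) y = ∑ u, wVec p π x₀ n u * p u y := by
          show (if y = x₀ then 0 else ∑ u, wVec p π x₀ n u * p u y) = _
          rw [if_neg hy]
        rw [hs, hw, hw', Finset.mul_sum, ← Finset.sum_add_distrib]
        refine Finset.sum_congr rfl fun u _ => ?_
        have := ih u
        calc π x₀ * (sVec p x₀ (n+1) u * p u y) + wVec p π x₀ (n+1) u * p u y
            = (π x₀ * sVec p x₀ (n+1) u + wVec p π x₀ (n+1) u) * p u y := by ring
          _ = wVec p π x₀ n u * p u y := by rw [this]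

lemma massS (hp1 : ∀ u, ∑ v, p u v = 1) (n : ℕ) :
    Aseq p x₀ (n+1) = Aseq p x₀ n - aseq p x₀ n := by
  show (∑ v, sVec p x₀ (n+1) v) = _
  have h1 : ∀ v, sVec p x₀ (n+1) v = if v = x₀ then 0 else ∑ u, sVec p x₀ n u * p u v :=
    fun v => rfl
  simp only [h1]
  rw [sum_ite_ne x₀ (fun v => ∑ u, sVec p x₀ n u * p u v), Finset.sum_comm]
  have : ∀ u, (∑ v, sVec p x₀ n u * p u v) = sVec p x₀ n u := by
    intro u; rw [← Finset.mul_sum, hp1 u, mul_one]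
  simp only [this]
  rfl

lemma massW (hp1 : ∀ u, ∑ v, p u v = 1) (n : ℕ) :
    Wseq p π x₀ (n+1) = Wseq p π x₀ n - bseq p π x₀ n := by
  show (∑ v, wVec p π x₀ (n+1) v) = _
  have h1 : ∀ v, wVec p π x₀ (n+1) v = if v = x₀ then 0 else ∑ u, wVec p π x₀ n u * p u v :=
    fun v => rfl
  simp only [h1]
  rw [sum_ite_ne x₀ (fun v => ∑ u, wVec p π x₀ n u * p u v), Finset.sum_comm]
  have : ∀ u, (∑ v, wVec p π x₀ n u * p u v) = wVec p π x₀ n u := by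
    intro u; rw [← Finset.mul_sum, hp1 u, mul_one]
  simp only [this]
  rfl

lemma Aseq_zero : Aseq p x₀ 0 = 1 := by
  show (∑ y, sVec p x₀ 0 y) = 1
  have : ∀ y, sVec p x₀ 0 y = if y = x₀ then 1 else 0 := fun y => rfl
  simp only [this]
  rw [Finset.sum_ite_eq' Finset.univ x₀ (fun _ => (1:ℝ))]
  simp

lemma Wseq_zero (hπ1 : ∑ u, π u = 1) : Wseq p π x₀ 0 = 1 - π x₀ := by
  show (∑ y, wVec p π x₀ 0 y) = 1 - π x₀
  have : ∀ y, wVec p π x₀ 0 y = if y = x₀ then 0 else π y := fun y => rfl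
  simp only [this]
  rw [sum_ite_ne x₀ π, hπ1]

lemma bseq_eq (hp1 : ∀ u, ∑ v, p u v = 1) (hπs : ∀ v, ∑ u, π u * p u v = π v) (n : ℕ) :
    bseq p π x₀ n = π x₀ * Aseq p x₀ (n+1) := by
  have h1 : π x₀ * Aseq p x₀ (n+1) + Wseq p π x₀ (n+1) = Wseq p π x₀ n := by
    show π x₀ * (∑ y, sVec p x₀ (n+1) y) + (∑ y, wVec p π x₀ (n+1) y) = ∑ y, wVec p π x₀ n y
    rw [Finset.mul_sum, ← Finset.sum_add_distrib]
    exact Finset.sum_congr rfl fun y _ => statA p π x₀ hπs n y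
  have h2 := massW p π x₀ hp1 n
  linarith

lemma sR_swap (hp1 : ∀ u, ∑ v, p u v = 1) :
    ∀ n m, (∑ y, sVec p x₀ m y * Rv p x₀ n y) = Aseq p x₀ (m + n) := by
  intro n
  induction n with
  | zero =>
      intro m
      simp only [Rv, mul_one, Nat.add_zero]
      rfl
  | succ n ih =>
      intro m
      have h1 : ∀ y, sVec p x₀ m y * Rv p x₀ (n+1) y
          = ∑ v, if v = x₀ then 0 else sVec p x₀ m y * p y v * Rv p x₀ n v := by
        intro y
        show sVec p x₀ m y * (∑ v, if v = x₀ then 0 else p y v * Rv p x₀ n v) = _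
        rw [Finset.mul_sum]
        refine Finset.sum_congr rfl fun v _ => ?_
        split <;> ring
      simp only [h1]
      rw [Finset.sum_comm]
      have h2 : ∀ v, (∑ y, if v = x₀ then 0 else sVec p x₀ m y * p y v * Rv p x₀ n v)
          = sVec p x₀ (m+1) v * Rv p x₀ n v := by
        intro v
        by_cases hv : v = x₀
        · simp only [if_pos hv, Finset.sum_const_zero]
          have : sVec p x₀ (m+1) v = 0 := by
            show (if v = x₀ then 0 else _) = 0
            rw [if_pos hv]
          rw [this, zero_mul]
        · simp only [if_neg hv]
          have : sVec p x₀ (m+1) v = ∑ y, sVec p x₀ m y * p y v := by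
            show (if v = x₀ then 0 else _) = _
            rw [if_neg hv]
          rw [this, Finset.sum_mul]
      simp only [h2]
      rw [ih (m+1)]
      congr 1
      omega

lemma wR_swap (hp1 : ∀ u, ∑ v, p u v = 1) :
    ∀ n m, (∑ y, wVec p π x₀ m y * Rv p x₀ n y) = Wseq p π x₀ (m + n) := by
  intro n
  induction n with
  | zero =>
      intro m
      simp only [Rv, mul_one, Nat.add_zero]
      rfl
  | succ n ih =>
      intro m
      have h1 : ∀ y, wVec p π x₀ m y * Rv p x₀ (n+1) y
          = ∑ v, if v = x₀ then 0 else wVec p π x₀ m y * p y v * Rv p x₀ n v := by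
        intro y
        show wVec p π x₀ m y * (∑ v, if v = x₀ then 0 else p y v * Rv p x₀ n v) = _
        rw [Finset.mul_sum]
        refine Finset.sum_congr rfl fun v _ => ?_
        split <;> ring
      simp only [h1]
      rw [Finset.sum_comm]
      have h2 : ∀ v, (∑ y, if v = x₀ then 0 else wVec p π x₀ m y * p y v * Rv p x₀ n v)
          = wVec p π x₀ (m+1) v * Rv p x₀ n v := by
        intro v
        by_cases hv : v = x₀
        · simp only [if_pos hv, Finset.sum_const_zero]
          have : wVec p π x₀ (m+1) v = 0 := by
            show (if v = x₀ then 0 else _) = 0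
            rw [if_pos hv]
          rw [this, zero_mul]
        · simp only [if_neg hv]
          have : wVec p π x₀ (m+1) v = ∑ y, wVec p π x₀ m y * p y v := by
            show (if v = x₀ then 0 else _) = _
            rw [if_neg hv]
          rw [this, Finset.sum_mul]
      simp only [h2]
      rw [ih (m+1)]
      congr 1
      omega

lemma Aseq_eq_Rv (hp1 : ∀ u, ∑ v, p u v = 1) (n : ℕ) : Aseq p x₀ n = Rv p x₀ n x₀ := by
  have := sR_swap p x₀ hp1 n 0
  rw [Nat.zero_add] at this
  rw [← this]
  have h : ∀ y, sVec p x₀ 0 y * Rv p x₀ n y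
      = if y = x₀ then Rv p x₀ n y else 0 := by
    intro y
    show (if y = x₀ then (1:ℝ) else 0) * Rv p x₀ n y = _
    split <;> ring
  rw [Finset.sum_congr rfl fun y _ => h y, Finset.sum_ite_eq' Finset.univ x₀]
  simp

end Algebra

section Comb
/-- lists avoiding `x₀` of fixed length `n`. -/
def LAn (x₀ : S) (n : ℕ) : Type _ := {L : List S // (∀ y ∈ L, y ≠ x₀) ∧ L.length = n}

noncomputable instance (x₀ : S) (n : ℕ) : Fintype (LAn x₀ n) :=
  Fintype.ofInjective (fun (L : LAn x₀ n) (i : Fin n) => L.1.get (Fin.cast L.2.2.symm i))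
    (by
      intro L M h
      apply Subtype.ext
      refine List.ext_get (by rw [L.2.2, M.2.2]) fun i h1 h2 => ?_
      have := congrFun h (Fin.cast L.2.2 ⟨i, h1⟩)
      simpa using this)

noncomputable def G (pf : S → S → ℝ) (x₀ : S) (n : ℕ) (y : S) : ℝ :=
  ∑ L : LAn x₀ n, pathProb pf (y :: L.1 ++ [x₀])

lemma subtype_sum (x₀ : S) (g : S → ℝ) :
    (∑ v : {v : S // v ≠ x₀}, g v.1) = ∑ v, if v = x₀ then 0 else g v := by
  have h1 : (∑ v ∈ Finset.univ.filter (fun v => v ≠ x₀), g v)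
      = ∑ v : {v : S // v ≠ x₀}, g v.1 :=
    Finset.sum_subtype _ (fun x => by simp) g
  rw [← h1, Finset.sum_filter]
  refine Finset.sum_congr rfl fun v _ => ?_
  by_cases hv : v = x₀ <;> simp [hv]

lemma G_zero (pf : S → S → ℝ) (x₀ : S) (y : S) : G pf x₀ 0 y = pf y x₀ := by
  let e0 : LAn x₀ 0 := ⟨[], by simp, rfl⟩
  have he0 : e0.1 = [] := rfl
  rw [G, Fintype.sum_eq_single e0
    (fun L hL => absurd (Subtype.ext ((List.length_eq_zero_iff.mp L.2.2).trans he0.symm)) hL)]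
  show pathProb pf [y, x₀] = pf y x₀
  rw [pathProb]
  simp [pathProb]

def consEquiv (x₀ : S) (n : ℕ) : ({v : S // v ≠ x₀} × LAn x₀ n) ≃ LAn x₀ (n+1) where
  toFun z := ⟨z.1.1 :: z.2.1, by
    constructor
    · intro y hy
      rcases List.mem_cons.mp hy with h | h
      · subst h; exact z.1.2
      · exact z.2.2.1 y h
    · simp [z.2.2.2]⟩
  invFun L :=
    have hne : L.1 ≠ [] := fun h => by simpa [h] using L.2.2
    ⟨⟨L.1.head hne, L.2.1 _ (List.head_mem hne)⟩,
     ⟨L.1.tail, fun y hy => L.2.1 y (List.mem_of_mem_tail hy),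
      by rw [List.length_tail, L.2.2]; rfl⟩⟩
  left_inv := fun z => by
    apply Prod.ext
    · apply Subtype.ext; rfl
    · apply Subtype.ext; rfl
  right_inv := fun L => Subtype.ext (List.cons_head_tail _)

lemma G_succ (pf : S → S → ℝ) (x₀ : S) (n : ℕ) (y : S) :
    G pf x₀ (n+1) y = ∑ v, if v = x₀ then 0 else pf y v * G pf x₀ n v := by
  rw [G, ← Equiv.sum_comp (consEquiv x₀ n) (fun L => pathProb pf (y :: L.1 ++ [x₀]))]
  rw [Fintype.sum_prod_type]
  have hterm : ∀ (v : {v : S // v ≠ x₀}) (L : LAn x₀ n),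
      pathProb pf (y :: ((consEquiv x₀ n) (v, L)).1 ++ [x₀])
        = pf y v.1 * pathProb pf (v.1 :: L.1 ++ [x₀]) := by
    intro v L
    have h1 : ((consEquiv x₀ n) (v, L)).1 = v.1 :: L.1 := rfl
    rw [h1]
    show pathProb pf (y :: v.1 :: (L.1 ++ [x₀])) = _
    rw [pathProb]
    rfl
  simp only [hterm]
  have h2 : ∀ v : {v : S // v ≠ x₀},
      (∑ L : LAn x₀ n, pf y v.1 * pathProb pf (v.1 :: L.1 ++ [x₀]))
        = pf y v.1 * G pf x₀ n v.1 := by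
    intro v
    rw [← Finset.mul_sum, G]
  simp only [h2]
  rw [subtype_sum x₀ (fun v => pf y v * G pf x₀ n v)]

/-- sigma decomposition of avoiding lists by length -/
def sigmaEquiv (x₀ : S) : (Σ n : ℕ, LAn x₀ n) ≃ {L : List S // ∀ y ∈ L, y ≠ x₀} where
  toFun z := ⟨z.2.1, z.2.2.1⟩
  invFun L := ⟨L.1.length, ⟨L.1, L.2, rfl⟩⟩
  left_inv z := by
    rcases z with ⟨n, ⟨L, hL, hlen⟩⟩
    subst hlen
    rfl
  right_inv L := rfl


lemma sG_swap (p : Matrix S S ℝ) (x₀ : S) (pf : S → S → ℝ) (hpf : pf = fun u v => p u v) :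
    ∀ n m, (∑ y, sVec p x₀ m y * G pf x₀ n y) = aseq p x₀ (m + n) := by
  intro n
  induction n with
  | zero =>
      intro m
      simp only [G_zero, hpf, Nat.add_zero]
      rfl
  | succ n ih =>
      intro m
      have h1 : ∀ y, sVec p x₀ m y * G pf x₀ (n+1) y
          = ∑ v, if v = x₀ then 0 else sVec p x₀ m y * p y v * G pf x₀ n v := by
        intro y
        rw [G_succ, Finset.mul_sum]
        refine Finset.sum_congr rfl fun v _ => ?_
        subst hpf
        split <;> ring
      simp only [h1]
      rw [Finset.sum_comm]
      have h2 : ∀ v, (∑ y, if v = x₀ then 0 else sVec p x₀ m y * p y v * G pf x₀ n v)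
          = sVec p x₀ (m+1) v * G pf x₀ n v := by
        intro v
        by_cases hv : v = x₀
        · simp only [if_pos hv, Finset.sum_const_zero]
          have : sVec p x₀ (m+1) v = 0 := by
            show (if v = x₀ then 0 else _) = 0
            rw [if_pos hv]
          rw [this, zero_mul]
        · simp only [if_neg hv]
          have : sVec p x₀ (m+1) v = ∑ y, sVec p x₀ m y * p y v := by
            show (if v = x₀ then 0 else _) = _
            rw [if_neg hv]
          rw [this, Finset.sum_mul]
      simp only [h2]
      rw [ih (m+1)]
      congr 1
      omega

lemma wG_swap (p : Matrix S S ℝ) (π : S → ℝ) (x₀ : S) (pf : S → S → ℝ)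
    (hpf : pf = fun u v => p u v) :
    ∀ n m, (∑ y, wVec p π x₀ m y * G pf x₀ n y) = bseq p π x₀ (m + n) := by
  intro n
  induction n with
  | zero =>
      intro m
      simp only [G_zero, hpf, Nat.add_zero]
      rfl
  | succ n ih =>
      intro m
      have h1 : ∀ y, wVec p π x₀ m y * G pf x₀ (n+1) y
          = ∑ v, if v = x₀ then 0 else wVec p π x₀ m y * p y v * G pf x₀ n v := by
        intro y
        rw [G_succ, Finset.mul_sum]
        refine Finset.sum_congr rfl fun v _ => ?_
        subst hpf
        split <;> ring
      simp only [h1]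
      rw [Finset.sum_comm]
      have h2 : ∀ v, (∑ y, if v = x₀ then 0 else wVec p π x₀ m y * p y v * G pf x₀ n v)
          = wVec p π x₀ (m+1) v * G pf x₀ n v := by
        intro v
        by_cases hv : v = x₀
        · simp only [if_pos hv, Finset.sum_const_zero]
          have : wVec p π x₀ (m+1) v = 0 := by
            show (if v = x₀ then 0 else _) = 0
            rw [if_pos hv]
          rw [this, zero_mul]
        · simp only [if_neg hv]
          have : wVec p π x₀ (m+1) v = ∑ y, wVec p π x₀ m y * p y v := by
            show (if v = x₀ then 0 else _) = _
            rw [if_neg hv]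
          rw [this, Finset.sum_mul]
      simp only [h2]
      rw [ih (m+1)]
      congr 1
      omega

lemma G_eq_aseq (p : Matrix S S ℝ) (x₀ : S) (pf : S → S → ℝ) (hpf : pf = fun u v => p u v)
    (n : ℕ) : G pf x₀ n x₀ = aseq p x₀ n := by
  have := sG_swap p x₀ pf hpf n 0
  rw [Nat.zero_add] at this
  rw [← this]
  have h : ∀ y, sVec p x₀ 0 y * G pf x₀ n y
      = if y = x₀ then G pf x₀ n y else 0 := by
    intro y
    show (if y = x₀ then (1:ℝ) else 0) * G pf x₀ n y = _
    split <;> ring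
  rw [Finset.sum_congr rfl fun y _ => h y, Finset.sum_ite_eq' Finset.univ x₀]
  simp

lemma Gsub_eq_bseq (p : Matrix S S ℝ) (π : S → ℝ) (x₀ : S) (pf : S → S → ℝ)
    (hpf : pf = fun u v => p u v) (n : ℕ) :
    (∑ y : {y : S // y ≠ x₀}, π y.1 * G pf x₀ n y.1) = bseq p π x₀ n := by
  have := wG_swap p π x₀ pf hpf n 0
  rw [Nat.zero_add] at this
  rw [← this, subtype_sum x₀ (fun y => π y * G pf x₀ n y)]
  refine Finset.sum_congr rfl fun y _ => ?_
  show _ = (if y = x₀ then 0 else π y) * G pf x₀ n y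
  split <;> ring

/-- sigma decomposition for pairs -/
def sigmaEquiv2 (x₀ : S) :
    (Σ n : ℕ, {y : S // y ≠ x₀} × LAn x₀ n)
      ≃ ({y : S // y ≠ x₀} × {L : List S // ∀ y ∈ L, y ≠ x₀}) where
  toFun z := (z.2.1, ⟨z.2.2.1, z.2.2.2.1⟩)
  invFun z := ⟨z.2.1.length, (z.1, ⟨z.2.1, z.2.2, rfl⟩)⟩
  left_inv z := by
    rcases z with ⟨n, y, ⟨L, hL, hlen⟩⟩
    subst hlen
    rfl
  right_inv z := rfl

end Comb

section Analytic

lemma summable_aux_sq_geo {c : ℝ} (hc0 : 0 ≤ c) (hc1 : c < 1) :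
    Summable (fun q : ℕ => ((q:ℝ)+1)^2 * c^q) := by
  have hn : ‖c‖ < 1 := by rwa [Real.norm_eq_abs, abs_of_nonneg hc0]
  have h2 : Summable (fun q : ℕ => (q:ℝ)^2 * c^q) :=
    summable_pow_mul_geometric_of_norm_lt_one 2 hn
  have h1 : Summable (fun q : ℕ => (q:ℝ)^1 * c^q) :=
    summable_pow_mul_geometric_of_norm_lt_one 1 hn
  have h0 : Summable (fun q : ℕ => c^q) := summable_geometric_of_lt_one hc0 hc1
  refine Summable.congr ((h2.add (h1.mul_left 2)).add h0) fun q => ?_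
  ring

lemma summable_sq_geo (N : ℕ) (hN : 1 ≤ N) {c : ℝ} (hc0 : 0 ≤ c) (hc1 : c < 1) :
    Summable (fun n : ℕ => ((n:ℝ)+1)^2 * c^(n / N)) := by
  haveI : NeZero N := ⟨by omega⟩
  set f : ℕ → ℝ := fun n => ((n:ℝ)+1)^2 * c^(n / N) with hf
  have hf0 : ∀ n, 0 ≤ f n := fun n => mul_nonneg (by positivity) (pow_nonneg hc0 _)
  have key : ∀ (q : ℕ) (r : Fin N), f ((Nat.divModEquiv N).symm (q, r))
      = ((q*N+(r:ℕ):ℝ)+1)^2 * c^q := by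
    intro q r
    have he : (Nat.divModEquiv N).symm (q, r) = q * N + (r:ℕ) := rfl
    rw [he]
    show ((((q*N+(r:ℕ)):ℕ):ℝ)+1)^2 * c^((q*N+(r:ℕ))/N) = _
    have hdiv : (q * N + (r:ℕ)) / N = q := by
      rw [show q * N + (r:ℕ) = (r:ℕ) + q * N by ring,
        Nat.add_mul_div_right _ _ (show 0 < N by omega), Nat.div_eq_of_lt r.isLt, Nat.zero_add]
    rw [hdiv]
    push_cast
    ring
  refine ((Nat.divModEquiv N).symm.summable_iff (f := f)).mp ?_
  have hfe : (0:ℕ × Fin N → ℝ) ≤ f ∘ (Nat.divModEquiv N).symm := fun z => hf0 _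
  refine (summable_prod_of_nonneg hfe).mpr ⟨?_, ?_⟩
  · intro q
    exact .of_finite
  · have hbound : ∀ q : ℕ, (∑' r : Fin N, f ((Nat.divModEquiv N).symm (q, r)))
        ≤ (N:ℝ)^3 * (((q:ℝ)+1)^2 * c^q) := by
      intro q
      rw [tsum_fintype]
      have step1 : (∑ r : Fin N, f ((Nat.divModEquiv N).symm (q, r)))
          ≤ ∑ _r : Fin N, ((N:ℝ)*((q:ℝ)+1))^2 * c^q := by
        refine Finset.sum_le_sum fun r _ => ?_
        rw [key q r]
        have h1 : ((q*N+(r:ℕ):ℝ)+1) ≤ (N:ℝ)*((q:ℝ)+1) := by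
          have hr : ((r:ℕ):ℝ) + 1 ≤ (N:ℝ) := by
            exact_mod_cast Nat.succ_le_of_lt r.isLt
          push_cast
          nlinarith [(by positivity : (0:ℝ) ≤ (q:ℝ)), (by positivity : (0:ℝ) ≤ (N:ℝ))]
        have h2 : (0:ℝ) ≤ (q*N+(r:ℕ):ℝ)+1 := by positivity
        have h3 := mul_le_mul h1 h1 h2 (by positivity)
        have hc : (0:ℝ) ≤ c^q := pow_nonneg hc0 _
        have h4 : ((q*N+(r:ℕ):ℝ)+1)^2 ≤ ((N:ℝ)*((q:ℝ)+1))^2 := by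
          rw [sq, sq]; exact h3
        exact mul_le_mul_of_nonneg_right h4 hc
      have step2 : (∑ _r : Fin N, ((N:ℝ)*((q:ℝ)+1))^2 * c^q)
          = (N:ℝ)^3 * (((q:ℝ)+1)^2 * c^q) := by
        rw [Finset.sum_const, Finset.card_univ, Fintype.card_fin]
        push_cast
        ring
      exact step1.trans_eq step2
    exact Summable.of_nonneg_of_le (fun q => tsum_nonneg fun r => hf0 _) hbound
      ((summable_aux_sq_geo hc0 hc1).mul_left _)


end Analytic

end RTSM

open RTSM in
/-- For an irreducible Markov chain on a finite state space `S` with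
stationary distribution `π` and `π(x₀) > 0`, the first return time `ξ` to `x₀`
(starting at `x₀`) satisfies `E[ξ²] = (1 + 2·E_π[T_{x₀}]) / π(x₀)`.

`E[ξ²]` is encoded as the sum over all tours `x₀ :: L ++ [x₀]` (with the interior
`L` avoiding `x₀`) of the tour probability times `(|L|+1)²`, where `ξ = |L|+1`.
`E_π[T_{x₀}]` is encoded as the sum over all starting states `y ≠ x₀` and interior
lists `L` avoiding `x₀` of `π(y)` times the path probability of `y :: L ++ [x₀]`
times the hitting time `|L|+1` (the contribution of starting at `x₀` itself, where
`T = 0`, vanishes). -/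
theorem return_time_second_moment_identity {S : Type*} [Fintype S] [DecidableEq S]
    (p : Matrix S S ℝ) (π : S → ℝ) (x₀ : S)
    (hp0 : ∀ u v, 0 ≤ p u v) (hp1 : ∀ u, ∑ v, p u v = 1)
    (hirr : ∀ u v : S, ∃ n : ℕ, 0 < (p ^ n) u v)
    (hπ0 : ∀ u, 0 ≤ π u) (hπ1 : ∑ u, π u = 1)
    (hπs : ∀ v, ∑ u, π u * p u v = π v)
    (hx : 0 < π x₀) :
    (∑' L : {L : List S // ∀ y ∈ L, y ≠ x₀},
        pathProb (fun u v => p u v) (x₀ :: L.1 ++ [x₀]) * ((L.1.length : ℝ) + 1) ^ 2)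
      = (1 + 2 * ∑' z : {y : S // y ≠ x₀} × {L : List S // ∀ y ∈ L, y ≠ x₀},
            π z.1.1 * pathProb (fun u v => p u v) (z.1.1 :: z.2.1 ++ [x₀])
              * ((z.2.1.length : ℝ) + 1))
        / π x₀ := by
  haveI : Nonempty S := ⟨x₀⟩
  set pf : S → S → ℝ := (fun u v => p u v) with hpf
  have hpf' : pf = fun u v => p u v := rfl
  -- decay constants
  obtain ⟨N, hN1, hNlt⟩ := exists_N p x₀ hp0 hp1 hirr
  set c : ℝ := Finset.univ.sup' Finset.univ_nonempty (Rv p x₀ N) with hcdef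
  have hcle : ∀ v, Rv p x₀ N v ≤ c := fun v => Finset.le_sup' _ (Finset.mem_univ v)
  have hc1 : c < 1 := (Finset.sup'_lt_iff _).mpr fun v _ => hNlt v
  have hc0 : (0:ℝ) ≤ c := le_trans (Rv_nonneg p x₀ hp0 N x₀) (hcle x₀)
  have hRb : ∀ n u, Rv p x₀ n u ≤ c ^ (n / N) :=
    fun n u => Rv_pow_bound p x₀ hp0 hp1 N hN1 c hc0 hcle n u
  -- nonnegativity of sequences
  have hA0 : ∀ n, 0 ≤ Aseq p x₀ n :=
    fun n => Finset.sum_nonneg fun y _ => sVec_nonneg p x₀ hp0 n y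
  have hW0 : ∀ n, 0 ≤ Wseq p π x₀ n :=
    fun n => Finset.sum_nonneg fun y _ => wVec_nonneg p π x₀ hp0 hπ0 n y
  have ha0 : ∀ n, 0 ≤ aseq p x₀ n :=
    fun n => Finset.sum_nonneg fun y _ =>
      mul_nonneg (sVec_nonneg p x₀ hp0 n y) (hp0 y x₀)
  have hb0 : ∀ n, 0 ≤ bseq p π x₀ n :=
    fun n => Finset.sum_nonneg fun y _ =>
      mul_nonneg (wVec_nonneg p π x₀ hp0 hπ0 n y) (hp0 y x₀)
  -- bounds
  have hAb : ∀ n, Aseq p x₀ n ≤ c ^ (n / N) := by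
    intro n
    rw [Aseq_eq_Rv p x₀ hp1 n]
    exact hRb n x₀
  have hWb : ∀ n, Wseq p π x₀ n ≤ c ^ (n / N) := by
    intro n
    have h1 := wR_swap p π x₀ hp1 n 0
    rw [Nat.zero_add] at h1
    rw [← h1]
    calc (∑ y, wVec p π x₀ 0 y * Rv p x₀ n y)
        ≤ ∑ y, wVec p π x₀ 0 y * c ^ (n / N) := by
          refine Finset.sum_le_sum fun y _ => ?_
          exact mul_le_mul_of_nonneg_left (hRb n y) (wVec_nonneg p π x₀ hp0 hπ0 0 y)
      _ = Wseq p π x₀ 0 * c ^ (n / N) := by rw [← Finset.sum_mul]; rfl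
      _ ≤ 1 * c ^ (n / N) := by
          apply mul_le_mul_of_nonneg_right _ (pow_nonneg hc0 _)
          rw [Wseq_zero p π x₀ hπ1]
          linarith
      _ = c ^ (n / N) := one_mul _
  have hAb1 : ∀ n, Aseq p x₀ (n+1) ≤ c ^ (n / N) := by
    intro n
    refine (hAb (n+1)).trans (pow_le_pow_of_le_one hc0 hc1.le ?_)
    exact Nat.div_le_div_right (by omega)
  have hone_le : ∀ n : ℕ, (1:ℝ) ≤ ((n:ℝ)+1) := by
    intro n
    have : (0:ℝ) ≤ (n:ℝ) := Nat.cast_nonneg n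
    linarith
  -- summability toolbox
  have Sgeo : Summable (fun n : ℕ => ((n:ℝ)+1)^2 * c^(n / N)) :=
    summable_sq_geo N hN1 hc0 hc1
  have master : ∀ (g : ℕ → ℝ), (∀ n, 0 ≤ g n) →
      (∀ n, g n ≤ ((n:ℝ)+1)^2 * c^(n / N)) → Summable g :=
    fun g h0 h1 => Summable.of_nonneg_of_le h0 h1 Sgeo
  have hsq1 : ∀ n : ℕ, (1:ℝ) ≤ ((n:ℝ)+1)^2 := by
    intro n
    have := hone_le n
    nlinarith
  have SA : Summable (Aseq p x₀) := by
    refine master _ hA0 fun n => ?_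
    calc Aseq p x₀ n ≤ c ^ (n/N) := hAb n
      _ = 1 * c ^ (n/N) := (one_mul _).symm
      _ ≤ ((n:ℝ)+1)^2 * c^(n / N) :=
          mul_le_mul_of_nonneg_right (hsq1 n) (pow_nonneg hc0 _)
  have SA1 : Summable (fun n => Aseq p x₀ (n+1)) := (summable_nat_add_iff 1).mpr SA
  have SW : Summable (Wseq p π x₀) := by
    refine master _ hW0 fun n => ?_
    calc Wseq p π x₀ n ≤ c ^ (n/N) := hWb n
      _ = 1 * c ^ (n/N) := (one_mul _).symm
      _ ≤ ((n:ℝ)+1)^2 * c^(n / N) :=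
          mul_le_mul_of_nonneg_right (hsq1 n) (pow_nonneg hc0 _)
  have SW1 : Summable (fun n => Wseq p π x₀ (n+1)) := (summable_nat_add_iff 1).mpr SW
  have Sg : Summable (fun n : ℕ => ((n:ℝ)+1)^2 * Aseq p x₀ n) := by
    refine master _ (fun n => mul_nonneg (by positivity) (hA0 n)) fun n => ?_
    exact mul_le_mul_of_nonneg_left (hAb n) (by positivity)
  have Sg1 : Summable (fun n : ℕ => ((n:ℝ)+1)^2 * Aseq p x₀ (n+1)) := by
    refine master _ (fun n => mul_nonneg (by positivity) (hA0 (n+1))) fun n => ?_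
    exact mul_le_mul_of_nonneg_left (hAb1 n) (by positivity)
  have Sgs : Summable (fun n : ℕ => ((n:ℝ)+2)^2 * Aseq p x₀ (n+1)) := by
    have h := (summable_nat_add_iff (f := fun n : ℕ => ((n:ℝ)+1)^2 * Aseq p x₀ n) 1).mpr Sg
    refine h.congr fun n => ?_
    push_cast
    ring
  have Sn1A1 : Summable (fun n : ℕ => ((n:ℝ)+1) * Aseq p x₀ (n+1)) := by
    refine master _ (fun n => mul_nonneg (by positivity) (hA0 (n+1))) fun n => ?_
    have h1 : ((n:ℝ)+1) * Aseq p x₀ (n+1) ≤ ((n:ℝ)+1) * c^(n/N) :=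
      mul_le_mul_of_nonneg_left (hAb1 n) (by positivity)
    refine h1.trans ?_
    have h2 : ((n:ℝ)+1) ≤ ((n:ℝ)+1)^2 := by nlinarith [hone_le n]
    exact mul_le_mul_of_nonneg_right h2 (pow_nonneg hc0 _)
  have Sa2 : Summable (fun n : ℕ => ((n:ℝ)+1)^2 * aseq p x₀ n) := by
    refine master _ (fun n => mul_nonneg (by positivity) (ha0 n)) fun n => ?_
    have han : aseq p x₀ n ≤ Aseq p x₀ n := by
      have := massS p x₀ hp1 n
      have := hA0 (n+1)
      linarith
    exact mul_le_mul_of_nonneg_left (han.trans (hAb n)) (by positivity)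
  have Sb1 : Summable (fun n : ℕ => ((n:ℝ)+1) * bseq p π x₀ n) := by
    refine master _ (fun n => mul_nonneg (by positivity) (hb0 n)) fun n => ?_
    have hbn : bseq p π x₀ n ≤ c^(n/N) := by
      rw [bseq_eq p π x₀ hp1 hπs n]
      calc π x₀ * Aseq p x₀ (n+1) ≤ 1 * Aseq p x₀ (n+1) := by
            apply mul_le_mul_of_nonneg_right _ (hA0 (n+1))
            have h := Finset.single_le_sum (f := π) (fun y _ => hπ0 y) (Finset.mem_univ x₀)
            rw [hπ1] at h
            exact h
        _ = Aseq p x₀ (n+1) := one_mul _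
        _ ≤ c^(n/N) := hAb1 n
    have h1 : ((n:ℝ)+1) * bseq p π x₀ n ≤ ((n:ℝ)+1) * c^(n/N) :=
      mul_le_mul_of_nonneg_left hbn (by positivity)
    refine h1.trans ?_
    have h2 : ((n:ℝ)+1) ≤ ((n:ℝ)+1)^2 := by nlinarith [hone_le n]
    exact mul_le_mul_of_nonneg_right h2 (pow_nonneg hc0 _)
  -- LHS reduction to a series over ℕ
  have hLHS : (∑' L : {L : List S // ∀ y ∈ L, y ≠ x₀},
      pathProb pf (x₀ :: L.1 ++ [x₀]) * ((L.1.length : ℝ) + 1) ^ 2)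
      = ∑' n : ℕ, ((n:ℝ)+1)^2 * aseq p x₀ n := by
    set F : {L : List S // ∀ y ∈ L, y ≠ x₀} → ℝ :=
      fun L => pathProb pf (x₀ :: L.1 ++ [x₀]) * ((L.1.length : ℝ) + 1) ^ 2 with hFdef
    have hF0 : ∀ L, 0 ≤ F L :=
      fun L => mul_nonneg (pathProb_nonneg pf (fun u v => hp0 u v) _) (by positivity)
    have hFσ : ∀ (n : ℕ) (L : LAn x₀ n), F (sigmaEquiv x₀ ⟨n, L⟩)
        = pathProb pf (x₀ :: L.1 ++ [x₀]) * ((n:ℝ)+1)^2 := by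
      intro n L
      have hval : (sigmaEquiv x₀ ⟨n, L⟩).1 = L.1 := rfl
      rw [hFdef]
      simp only [hval, L.2.2]
    have hinner : ∀ n : ℕ, (∑' L : LAn x₀ n, F (sigmaEquiv x₀ ⟨n, L⟩))
        = ((n:ℝ)+1)^2 * aseq p x₀ n := by
      intro n
      rw [tsum_fintype, Finset.sum_congr rfl (fun L _ => hFσ n L), ← Finset.sum_mul]
      rw [show (∑ L : LAn x₀ n, pathProb pf (x₀ :: L.1 ++ [x₀])) = G pf x₀ n x₀ from rfl]
      rw [G_eq_aseq p x₀ pf hpf' n]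
      ring
    have hsig : Summable (fun z : (Σ n : ℕ, LAn x₀ n) => F (sigmaEquiv x₀ z)) := by
      apply (summable_sigma_of_nonneg (fun z => hF0 _)).mpr
      refine ⟨fun n => .of_finite, ?_⟩
      exact Sa2.congr fun n => (hinner n).symm
    calc (∑' L, F L) = ∑' z : (Σ n : ℕ, LAn x₀ n), F (sigmaEquiv x₀ z) :=
          (Equiv.tsum_eq (sigmaEquiv x₀) F).symm
      _ = ∑' (n : ℕ) (L : LAn x₀ n), F (sigmaEquiv x₀ ⟨n, L⟩) :=
          Summable.tsum_sigma' (fun n => .of_finite) hsig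
      _ = ∑' n : ℕ, ((n:ℝ)+1)^2 * aseq p x₀ n := tsum_congr hinner
  -- RHS reduction
  have hRHS : (∑' z : {y : S // y ≠ x₀} × {L : List S // ∀ y ∈ L, y ≠ x₀},
      π z.1.1 * pathProb pf (z.1.1 :: z.2.1 ++ [x₀]) * ((z.2.1.length : ℝ) + 1))
      = ∑' n : ℕ, ((n:ℝ)+1) * bseq p π x₀ n := by
    set F : ({y : S // y ≠ x₀} × {L : List S // ∀ y ∈ L, y ≠ x₀}) → ℝ :=
      fun z => π z.1.1 * pathProb pf (z.1.1 :: z.2.1 ++ [x₀]) * ((z.2.1.length : ℝ) + 1)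
      with hFdef
    have hF0 : ∀ z, 0 ≤ F z := fun z =>
      mul_nonneg (mul_nonneg (hπ0 _) (pathProb_nonneg pf (fun u v => hp0 u v) _))
        (by positivity)
    have hFσ : ∀ (n : ℕ) (z : {y : S // y ≠ x₀} × LAn x₀ n),
        F (sigmaEquiv2 x₀ ⟨n, z⟩)
        = π z.1.1 * pathProb pf (z.1.1 :: z.2.1 ++ [x₀]) * ((n:ℝ)+1) := by
      intro n z
      have hval : (sigmaEquiv2 x₀ ⟨n, z⟩).2.1 = z.2.1 := rfl
      have hy : (sigmaEquiv2 x₀ ⟨n, z⟩).1.1 = z.1.1 := rfl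
      rw [hFdef]
      simp only [hval, hy, z.2.2.2]
    have hinner : ∀ n : ℕ,
        (∑' z : {y : S // y ≠ x₀} × LAn x₀ n, F (sigmaEquiv2 x₀ ⟨n, z⟩))
        = ((n:ℝ)+1) * bseq p π x₀ n := by
      intro n
      rw [tsum_fintype, Finset.sum_congr rfl (fun z _ => hFσ n z),
        Fintype.sum_prod_type]
      have h1 : ∀ y : {y : S // y ≠ x₀},
          (∑ L : LAn x₀ n, π y.1 * pathProb pf (y.1 :: L.1 ++ [x₀]) * ((n:ℝ)+1))
          = π y.1 * G pf x₀ n y.1 * ((n:ℝ)+1) := by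
        intro y
        rw [G, Finset.mul_sum, Finset.sum_mul]
      rw [Finset.sum_congr rfl (fun y _ => h1 y)]
      rw [show (∑ y : {y : S // y ≠ x₀}, π y.1 * G pf x₀ n y.1 * ((n:ℝ)+1))
          = (∑ y : {y : S // y ≠ x₀}, π y.1 * G pf x₀ n y.1) * ((n:ℝ)+1) from
        (Finset.sum_mul _ _ _).symm]
      rw [Gsub_eq_bseq p π x₀ pf hpf' n]
      ring
    have hsig : Summable
        (fun z : (Σ n : ℕ, {y : S // y ≠ x₀} × LAn x₀ n) => F (sigmaEquiv2 x₀ z)) := by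
      apply (summable_sigma_of_nonneg (fun z => hF0 _)).mpr
      refine ⟨fun n => .of_finite, ?_⟩
      exact Sb1.congr fun n => (hinner n).symm
    calc (∑' z, F z)
        = ∑' z : (Σ n : ℕ, {y : S // y ≠ x₀} × LAn x₀ n), F (sigmaEquiv2 x₀ z) :=
          (Equiv.tsum_eq (sigmaEquiv2 x₀) F).symm
      _ = ∑' (n : ℕ) (z : {y : S // y ≠ x₀} × LAn x₀ n), F (sigmaEquiv2 x₀ ⟨n, z⟩) :=
          Summable.tsum_sigma' (fun n => .of_finite) hsig
      _ = ∑' n : ℕ, ((n:ℝ)+1) * bseq p π x₀ n := tsum_congr hinner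
  rw [hLHS, hRHS]
  -- Kac-type identity
  have EKac : π x₀ * (∑' n, Aseq p x₀ (n+1)) = 1 - π x₀ := by
    have h1 : ∀ n, π x₀ * Aseq p x₀ (n+1) = Wseq p π x₀ n - Wseq p π x₀ (n+1) := by
      intro n
      have hb := bseq_eq p π x₀ hp1 hπs n
      have hm := massW p π x₀ hp1 n
      linarith
    have h2 : (∑' n, (Wseq p π x₀ n - Wseq p π x₀ (n+1))) = Wseq p π x₀ 0 := by
      rw [Summable.tsum_sub SW SW1, Summable.tsum_eq_zero_add SW]
      ring
    calc π x₀ * (∑' n, Aseq p x₀ (n+1))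
        = ∑' n, π x₀ * Aseq p x₀ (n+1) := (tsum_mul_left).symm
      _ = ∑' n, (Wseq p π x₀ n - Wseq p π x₀ (n+1)) := tsum_congr h1
      _ = Wseq p π x₀ 0 := h2
      _ = 1 - π x₀ := Wseq_zero p π x₀ hπ1
  -- LHS value
  have hLv : (∑' n : ℕ, ((n:ℝ)+1)^2 * aseq p x₀ n)
      = 1 + ∑' n : ℕ, (2*(n:ℝ)+3) * Aseq p x₀ (n+1) := by
    have h1 : ∀ n : ℕ, ((n:ℝ)+1)^2 * aseq p x₀ n
        = ((n:ℝ)+1)^2 * Aseq p x₀ n - ((n:ℝ)+1)^2 * Aseq p x₀ (n+1) := by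
      intro n
      have := massS p x₀ hp1 n
      nlinarith [this]
    rw [tsum_congr h1, Summable.tsum_sub Sg Sg1, Summable.tsum_eq_zero_add Sg]
    have h2 : (∑' n : ℕ, (((n+1:ℕ):ℝ)+1)^2 * Aseq p x₀ (n+1))
        = ∑' n : ℕ, ((n:ℝ)+2)^2 * Aseq p x₀ (n+1) := by
      refine tsum_congr fun n => ?_
      push_cast
      ring
    rw [h2]
    have h3 : (∑' n : ℕ, ((n:ℝ)+2)^2 * Aseq p x₀ (n+1))
        - (∑' n : ℕ, ((n:ℝ)+1)^2 * Aseq p x₀ (n+1))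
        = ∑' n : ℕ, (2*(n:ℝ)+3) * Aseq p x₀ (n+1) := by
      rw [← Summable.tsum_sub Sgs Sg1]
      refine tsum_congr fun n => ?_
      ring
    rw [Aseq_zero p x₀]
    push_cast
    linarith [h3]
  -- RHS value
  have hRv : (∑' n : ℕ, ((n:ℝ)+1) * bseq p π x₀ n)
      = π x₀ * ∑' n : ℕ, ((n:ℝ)+1) * Aseq p x₀ (n+1) := by
    calc (∑' n : ℕ, ((n:ℝ)+1) * bseq p π x₀ n)
        = ∑' n : ℕ, π x₀ * (((n:ℝ)+1) * Aseq p x₀ (n+1)) := by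
          refine tsum_congr fun n => ?_
          rw [bseq_eq p π x₀ hp1 hπs n]
          ring
      _ = π x₀ * ∑' n : ℕ, ((n:ℝ)+1) * Aseq p x₀ (n+1) := tsum_mul_left
  rw [hLv, hRv]
  -- final arithmetic
  rw [eq_div_iff (ne_of_gt hx)]
  have hsplit : (∑' n : ℕ, (2*(n:ℝ)+3) * Aseq p x₀ (n+1))
      = 2 * (∑' n : ℕ, ((n:ℝ)+1) * Aseq p x₀ (n+1)) + ∑' n, Aseq p x₀ (n+1) := by
    have hs2 : Summable (fun n : ℕ => 2 * (((n:ℝ)+1) * Aseq p x₀ (n+1))) :=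
      Sn1A1.mul_left 2
    calc (∑' n : ℕ, (2*(n:ℝ)+3) * Aseq p x₀ (n+1))
        = ∑' n : ℕ, (2 * (((n:ℝ)+1) * Aseq p x₀ (n+1)) + Aseq p x₀ (n+1)) := by
          refine tsum_congr fun n => ?_
          ring
      _ = 2 * (∑' n : ℕ, ((n:ℝ)+1) * Aseq p x₀ (n+1)) + ∑' n, Aseq p x₀ (n+1) := by
          rw [Summable.tsum_add hs2 SA1, tsum_mul_left]
  rw [hsplit]
  have := EKac
  ring_nf
  ring_nf at this
  nlinarith [this]
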